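/- Let ℍ_ℝ be the algebra of real quaternions. If f, g : ℍ_ℝ → ℍ_ℝ are ℝ-linear maps such that f is a left {g,g}-derivation, then f = 0 and g = 0. -/

import Mathlib

open scoped Quaternion

noncomputable def qI : ℍ[ℝ] := ⟨0,1,0,0⟩
noncomputable def qJ : ℍ[ℝ] := ⟨0,0,1,0⟩
noncomputable def qK : ℍ[ℝ] := ⟨0,0,0,1⟩

lemma quat_decomp (p : ℍ[ℝ]) :
    p = p.re • (1 : ℍ[ℝ]) + p.imI • qI + p.imJ • qJ + p.imK • qK := by
  ext <;> simp <;> simp [qI, qJ, qK]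

lemma self_eq_neg_zero {M : Type*} [AddCommGroup M] [Module ℝ M] {a : M}
    (h : a = -a) : a = 0 := by
  have h2 : (2:ℝ) • a = 0 := by rw [two_smul]; nth_rewrite 1 [h]; exact neg_add_cancel a
  rcases smul_eq_zero.mp h2 with h | h
  · norm_num at h
  · exact h

/-- if `f` is a left `{g,g}`-derivation on the real quaternions, then
`f = 0` and `g = 0`. -/
theorem left_gg_derivation_quaternion_eq_zero
    (f g : ℍ[ℝ] →ₗ[ℝ] ℍ[ℝ])
    (hf : ∀ p q : ℍ[ℝ], f (p * q) = p * g q + q * g p) :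
    f = 0 ∧ g = 0 := by
  have hij : qI * qJ = qK := by ext <;> simp <;> simp [qI, qJ, qK]
  have hji : qJ * qI = -qK := by ext <;> simp <;> simp [qI, qJ, qK]
  have hjk : qJ * qK = qI := by ext <;> simp <;> simp [qI, qJ, qK]
  have hkj : qK * qJ = -qI := by ext <;> simp <;> simp [qI, qJ, qK]
  have hki : qK * qI = qJ := by ext <;> simp <;> simp [qI, qJ, qK]
  have hik : qI * qK = -qJ := by ext <;> simp <;> simp [qI, qJ, qK]
  have hii : qI * qI = -1 := by ext <;> simp <;> simp [qI]
  have hsym : ∀ p q : ℍ[ℝ], f (p * q) = f (q * p) := fun p q => by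
    rw [hf, hf, add_comm]
  have fk : f qK = 0 := by
    have h := hsym qI qJ
    rw [hij, hji, map_neg] at h
    exact self_eq_neg_zero h
  have fi : f qI = 0 := by
    have h := hsym qJ qK
    rw [hjk, hkj, map_neg] at h
    exact self_eq_neg_zero h
  have fj : f qJ = 0 := by
    have h := hsym qK qI
    rw [hki, hik, map_neg] at h
    exact self_eq_neg_zero h
  have h1 : ∀ p : ℍ[ℝ], f p = p * g 1 + g p := fun p => by
    have := hf p 1
    rwa [mul_one, one_mul] at this
  have hf1 : f 1 = g 1 + g 1 := by
    have := hf 1 1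
    rwa [one_mul, one_mul] at this
  have hgi : g qI = -(qI * g 1) := by
    have h := h1 qI
    rw [fi] at h
    exact eq_neg_of_add_eq_zero_right h.symm
  have hg1 : g 1 = 0 := by
    have h := hf qI qI
    rw [hii, map_neg, hf1, hgi, mul_neg, ← mul_assoc, hii, neg_mul, one_mul,
      neg_neg] at h
    have hsum : g 1 + g 1 = 0 := self_eq_neg_zero h.symm
    exact self_eq_neg_zero (add_eq_zero_iff_eq_neg.mp hsum)
  have hf1' : f 1 = 0 := by rw [hf1, hg1, add_zero]
  have hfg : ∀ p, g p = f p := fun p => by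
    have := h1 p; rw [hg1, mul_zero, zero_add] at this; exact this.symm
  have key : ∀ p : ℍ[ℝ], f p = 0 := fun p => by
    conv_lhs => rw [quat_decomp p]
    rw [map_add, map_add, map_add, map_smul, map_smul, map_smul, map_smul,
      hf1', fi, fj, fk]
    simp
  exact ⟨LinearMap.ext fun p => key p, LinearMap.ext fun p => by rw [hfg p, key p]; rfl⟩
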